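/- Let G : Z → E be C² near z̄ with G(z̄) = 0 and K ⊆ E a closed convex cone, and assume metric subregularity of z ↦ G(z) − K at (z̄, 0) with modulus κ: dist(z, G⁻¹(K)) ≤ κ·dist(G(z), K) for z near z̄. Let v ∈ Z with ∇G(z̄)v ∈ K. Then for every pair (w, q) ∈ Z × E satisfying ∇G(z̄)w + (1/2)∇²G(z̄)(v,v) + q ∈ T_K(∇G(z̄)v), there exists w̃ ∈ Z with ∇G(z̄)w̃ + (1/2)∇²G(z̄)(v,v) ∈ T_K(∇G(z̄)v) and ‖w̃ − w‖ ≤ κ‖q‖. -/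

import Mathlib

open Set Filter Topology Metric
open scoped Pointwise

variable {E : Type*} [NormedAddCommGroup E] [InnerProductSpace ℝ E]

/-- The tangent cone of convex analysis to `Ω` at `z`: closure of `ℝ₊ (Ω - z)`. -/
def tangentConeCA (Ω : Set E) (z : E) : Set E :=
  closure {w | ∃ t : ℝ, 0 ≤ t ∧ ∃ z' ∈ Ω, w = t • (z' - z)}

open Asymptotics

section Aux

variable {Z F : Type*} [NormedAddCommGroup Z] [NormedSpace ℝ Z]
  [NormedAddCommGroup F] [NormedSpace ℝ F]

/-- Second-order Taylor expansion with little-o remainder. -/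
lemma taylor2_aux (G : Z → F) (z0 : Z) (hG : ContDiffAt ℝ 2 G z0) :
    (fun h : Z => G (z0 + h) - G z0 - fderiv ℝ G z0 h
        - (1/2 : ℝ) • fderiv ℝ (fderiv ℝ G) z0 h h) =o[𝓝 0] (fun h => ‖h‖ ^ 2) := by
  set A := fderiv ℝ G z0 with hA
  set D := fderiv ℝ (fderiv ℝ G) z0 with hD'
  have hdiff : ∀ᶠ z in 𝓝 z0, DifferentiableAt ℝ G z := by
    filter_upwards [hG.eventually (by norm_num)] with z hz
    exact hz.differentiableAt (by norm_num)
  have hD : HasFDerivAt (fderiv ℝ G) D z0 :=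
    ((hG.fderiv_right (m := 1) le_rfl).differentiableAt one_ne_zero).hasFDerivAt
  have hsymm : ∀ a b : Z, D a b = D b a := by
    intro a b
    exact second_derivative_symmetric_of_eventually
      (by filter_upwards [hdiff] with z hz using hz.hasFDerivAt) hD a b
  have hDflip : D.flip = D := by
    ext a b
    exact hsymm b a
  rw [isLittleO_iff]
  intro c hc
  have hb := hdiff.and (isLittleO_iff.1 hD.isLittleO hc)
  rw [Metric.eventually_nhds_iff] at hb
  obtain ⟨δ, hδ, hb⟩ := hb
  have : ∀ᶠ h : Z in 𝓝 0, ‖h‖ < δ := by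
    filter_upwards [Metric.ball_mem_nhds (0:Z) hδ] with h hh
    simpa [dist_eq_norm] using hh
  filter_upwards [this] with h hh
  set g : Z → F := fun u => G (z0 + u) - G z0 - A u - (1/2 : ℝ) • D u u with hg
  have hball : ∀ u : Z, u ∈ Metric.closedBall (0:Z) ‖h‖ → dist (z0 + u) z0 < δ := by
    intro u hu
    have : ‖u‖ ≤ ‖h‖ := by simpa [dist_eq_norm] using hu
    simpa [dist_eq_norm] using lt_of_le_of_lt this hh
  have hder : ∀ u ∈ Metric.closedBall (0:Z) ‖h‖,
      HasFDerivWithinAt g (fderiv ℝ G (z0 + u) - A - D u) (Metric.closedBall (0:Z) ‖h‖) u := by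
    intro u hu
    have h1 : HasFDerivAt (fun u' : Z => G (z0 + u')) (fderiv ℝ G (z0 + u)) u := by
      have hGd : HasFDerivAt G (fderiv ℝ G (z0 + u)) (z0 + u) :=
        (hb (hball u hu)).1.hasFDerivAt
      have h0 : HasFDerivAt (fun u' : Z => z0 + u') (ContinuousLinearMap.id ℝ Z) u :=
        (hasFDerivAt_id u).const_add z0
      simpa [Function.comp_def] using hGd.comp u h0
    have h2 : HasFDerivAt (fun u' : Z => D u' u') (D u + D u) u := by
      have := (D.hasFDerivAt (x := u)).clm_apply (hasFDerivAt_id u)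
      simpa [hDflip] using this
    have h3 : HasFDerivAt g
        (fderiv ℝ G (z0 + u) - A - (1/2 : ℝ) • (D u + D u)) u :=
      ((h1.sub_const (G z0)).sub A.hasFDerivAt).sub (h2.const_smul (1/2 : ℝ))
    have e : (1/2 : ℝ) • (D u + D u) = D u := by
      rw [← two_smul ℝ, smul_smul]; norm_num
    rw [e] at h3
    exact h3.hasFDerivWithinAt
  have hbound : ∀ u ∈ Metric.closedBall (0:Z) ‖h‖,
      ‖fderiv ℝ G (z0 + u) - A - D u‖ ≤ c * ‖h‖ := by
    intro u hu
    have h2 := (hb (hball u hu)).2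
    simp only [add_sub_cancel_left] at h2
    have hun : ‖u‖ ≤ ‖h‖ := by simpa [dist_eq_norm] using hu
    calc ‖fderiv ℝ G (z0 + u) - A - D u‖ ≤ c * ‖u‖ := h2
      _ ≤ c * ‖h‖ := by
          exact mul_le_mul_of_nonneg_left hun hc.le
  have hmem : h ∈ Metric.closedBall (0:Z) ‖h‖ := by
    simp [Metric.mem_closedBall, dist_eq_norm]
  have hmv := Convex.norm_image_sub_le_of_norm_hasFDerivWithin_le
    (f' := fun u => fderiv ℝ G (z0 + u) - A - D u) hder hbound
    (convex_closedBall (0:Z) ‖h‖) (Metric.mem_closedBall_self (norm_nonneg h)) hmem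
  have hg0 : g 0 = 0 := by simp [hg]
  rw [hg0, sub_zero, sub_zero] at hmv
  calc ‖g h‖ ≤ c * ‖h‖ * ‖h‖ := hmv
    _ = c * ‖‖h‖ ^ 2‖ := by
        rw [Real.norm_of_nonneg (by positivity)]; ring

/-- Symmetry of the second derivative. -/
lemma secondDeriv_symm (G : Z → F) (z0 : Z) (hG : ContDiffAt ℝ 2 G z0) :
    ∀ a b : Z, fderiv ℝ (fderiv ℝ G) z0 a b = fderiv ℝ (fderiv ℝ G) z0 b a := by
  intro a b
  have hdiff : ∀ᶠ z in 𝓝 z0, DifferentiableAt ℝ G z := by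
    filter_upwards [hG.eventually (by norm_num)] with z hz
    exact hz.differentiableAt (by norm_num)
  exact second_derivative_symmetric_of_eventually
    (by filter_upwards [hdiff] with z hz using hz.hasFDerivAt)
    ((hG.fderiv_right (m := 1) le_rfl).differentiableAt one_ne_zero).hasFDerivAt a b

set_option maxHeartbeats 2000000 in
/-- Uniform second-order Taylor estimate along the curves `t ↦ z0 + t v + t² u`,
uniform over `‖u‖ ≤ M`. -/
lemma taylor_curve (G : Z → F) (z0 : Z) (hG : ContDiffAt ℝ 2 G z0) (hG0 : G z0 = 0)
    (v : Z) (M ε : ℝ) (hM : 0 < M) (hε : 0 < ε) :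
    ∀ᶠ t in 𝓝[>] (0:ℝ), ∀ u : Z, ‖u‖ ≤ M →
      ‖G (z0 + t • v + t ^ 2 • u) -
        (t • fderiv ℝ G z0 v +
          t ^ 2 • (fderiv ℝ G z0 u + (1/2 : ℝ) • fderiv ℝ (fderiv ℝ G) z0 v v))‖
        ≤ ε * t ^ 2 := by
  set A := fderiv ℝ G z0 with hA
  set D := fderiv ℝ (fderiv ℝ G) z0 with hD'
  have hsymm := secondDeriv_symm G z0 hG
  obtain ⟨C, hC0, hCvu, hCuu⟩ : ∃ C : ℝ, 0 ≤ C ∧ (∀ a b : Z, ‖D a b‖ ≤ C * ‖a‖ * ‖b‖) ∧ True :=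
    ⟨‖D‖, D.opNorm_nonneg, fun a b => D.le_opNorm₂ a b, trivial⟩
  clear hCuu
  obtain ⟨ε', hε'pos, hε'le⟩ : ∃ x : ℝ, 0 < x ∧ x * (‖v‖ + M) ^ 2 ≤ ε / 2 := by
    refine ⟨ε / (2 * (‖v‖ + M) ^ 2 + 1), by positivity, ?_⟩
    rw [div_mul_eq_mul_div, div_le_div_iff₀ (by positivity) (by norm_num)]
    nlinarith [hε.le, sq_nonneg (‖v‖ + M)]
  have hlo := Asymptotics.isLittleO_iff.1 (taylor2_aux G z0 hG) hε'pos
  rw [Metric.eventually_nhds_iff] at hlo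
  obtain ⟨δ, hδ, hδb⟩ := hlo
  obtain ⟨tm, htm, htm1, htmδ, htmε⟩ :
      ∃ x : ℝ, 0 < x ∧ x ≤ 1 ∧ x * (‖v‖ + M + 1) ≤ δ ∧
        x * (2 * (C * ‖v‖ * M + C * M * M) + 2) ≤ ε := by
    refine ⟨min 1 (min (δ / (‖v‖ + M + 1)) (ε / (2 * (C * ‖v‖ * M + C * M * M) + 2))),
      lt_min one_pos (lt_min (by positivity) (by positivity)), min_le_left _ _, ?_, ?_⟩
    · rw [← le_div_iff₀ (by positivity)]
      exact le_trans (min_le_right _ _) (min_le_left _ _)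
    · rw [← le_div_iff₀ (by positivity)]
      exact le_trans (min_le_right _ _) (min_le_right _ _)
  filter_upwards [Ioo_mem_nhdsGT_of_mem (show (0:ℝ) ∈ Ico 0 tm from ⟨le_rfl, htm⟩)]
    with t ht u hu
  obtain ⟨ht0, httm⟩ := ht
  have hv0 : (0:ℝ) ≤ ‖v‖ := norm_nonneg v
  have ht1 : t ≤ 1 := le_trans httm.le htm1
  have htδ : t * (‖v‖ + M + 1) ≤ δ :=
    le_trans (mul_le_mul_of_nonneg_right httm.le (by positivity)) htmδ
  have htε : t * (2 * (C * ‖v‖ * M + C * M * M) + 2) ≤ ε :=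
    le_trans (mul_le_mul_of_nonneg_right httm.le (by positivity)) htmε
  set h : Z := t • v + t ^ 2 • u with hhdef
  have hhn : ‖h‖ ≤ t * (‖v‖ + M) := by
    calc ‖h‖ ≤ ‖t • v‖ + ‖t ^ 2 • u‖ := norm_add_le _ _
      _ = t * ‖v‖ + t ^ 2 * ‖u‖ := by
          rw [norm_smul, norm_smul, Real.norm_of_nonneg ht0.le,
            Real.norm_of_nonneg (by positivity)]
      _ ≤ t * ‖v‖ + t * M := by
          have h2 : t ^ 2 * ‖u‖ ≤ t * M := by
            have h3 : t ^ 2 ≤ t := by nlinarith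
            nlinarith [norm_nonneg u]
          linarith
      _ = t * (‖v‖ + M) := by ring
  have hhδ : dist h 0 < δ := by
    rw [dist_zero_right]
    refine lt_of_le_of_lt hhn ?_
    nlinarith
  have hgb := hδb hhδ
  rw [Real.norm_of_nonneg (by positivity : (0:ℝ) ≤ ‖h‖ ^ 2)] at hgb
  have hAh : A h = t • A v + t ^ 2 • A u := by
    simp [hhdef, map_add, map_smul]
  have hDh : D h h = t ^ 2 • D v v + (2 * t ^ 3) • D v u + t ^ 4 • D u u := by
    simp only [hhdef, map_add, map_smul, ContinuousLinearMap.add_apply,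
      ContinuousLinearMap.coe_smul', Pi.smul_apply, (show D u v = D v u from hsymm u v)]
    module
  have key : G (z0 + h) - (t • A v + t ^ 2 • (A u + (1/2 : ℝ) • D v v)) =
      (G (z0 + h) - G z0 - A h - (1/2 : ℝ) • D h h)
        + t ^ 3 • D v u + ((1/2) * t ^ 4) • D u u := by
    rw [hAh, hDh, hG0]
    module
  have hvu : ‖D v u‖ ≤ C * ‖v‖ * M := by
    calc ‖D v u‖ ≤ C * ‖v‖ * ‖u‖ := hCvu v u
      _ ≤ C * ‖v‖ * M := mul_le_mul_of_nonneg_left hu (by positivity)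
  have huu : ‖D u u‖ ≤ C * M * M := by
    calc ‖D u u‖ ≤ C * ‖u‖ * ‖u‖ := hCvu u u
      _ ≤ C * M * M := by
          have h9 : ‖u‖ * ‖u‖ ≤ M * M := mul_le_mul hu hu (norm_nonneg u) hM.le
          nlinarith
  have hnorm : ‖G (z0 + h) - (t • A v + t ^ 2 • (A u + (1/2 : ℝ) • D v v))‖ ≤
      ε' * ‖h‖ ^ 2 + t ^ 3 * (C * ‖v‖ * M) + (1/2) * t ^ 4 * (C * M * M) := by
    rw [key]
    have n1 : ‖t ^ 3 • D v u‖ ≤ t ^ 3 * (C * ‖v‖ * M) := by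
      rw [norm_smul, Real.norm_of_nonneg (by positivity)]
      exact mul_le_mul_of_nonneg_left hvu (by positivity)
    have n2 : ‖((1/2) * t ^ 4) • D u u‖ ≤ (1/2) * t ^ 4 * (C * M * M) := by
      rw [norm_smul, Real.norm_of_nonneg (by positivity)]
      exact mul_le_mul_of_nonneg_left huu (by positivity)
    calc ‖(G (z0 + h) - G z0 - A h - (1/2 : ℝ) • D h h)
          + t ^ 3 • D v u + ((1/2) * t ^ 4) • D u u‖
        ≤ ‖(G (z0 + h) - G z0 - A h - (1/2 : ℝ) • D h h) + t ^ 3 • D v u‖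
            + ‖((1/2) * t ^ 4) • D u u‖ := norm_add_le _ _
      _ ≤ ‖G (z0 + h) - G z0 - A h - (1/2 : ℝ) • D h h‖ + ‖t ^ 3 • D v u‖
            + ‖((1/2) * t ^ 4) • D u u‖ := by
          have := norm_add_le (G (z0 + h) - G z0 - A h - (1/2 : ℝ) • D h h) (t ^ 3 • D v u)
          linarith
      _ ≤ ε' * ‖h‖ ^ 2 + t ^ 3 * (C * ‖v‖ * M) + (1/2) * t ^ 4 * (C * M * M) := by
          linarith [hgb]
  rw [show z0 + t • v + t ^ 2 • u = z0 + h from by rw [hhdef]; abel]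
  refine le_trans hnorm ?_
  have e1 : ε' * ‖h‖ ^ 2 ≤ (ε / 2) * t ^ 2 := by
    have h1 : ‖h‖ ^ 2 ≤ t ^ 2 * (‖v‖ + M) ^ 2 := by
      nlinarith [norm_nonneg h]
    calc ε' * ‖h‖ ^ 2 ≤ ε' * (t ^ 2 * (‖v‖ + M) ^ 2) :=
          mul_le_mul_of_nonneg_left h1 hε'pos.le
      _ = (ε' * (‖v‖ + M) ^ 2) * t ^ 2 := by ring
      _ ≤ (ε / 2) * t ^ 2 := mul_le_mul_of_nonneg_right hε'le (by positivity)
  have e2 : t ^ 3 * (C * ‖v‖ * M) + (1/2) * t ^ 4 * (C * M * M) ≤ (ε / 2) * t ^ 2 := by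
    have ha : (0:ℝ) ≤ C * ‖v‖ * M := by positivity
    have hb : (0:ℝ) ≤ C * M * M := by positivity
    have ht2le : t ^ 2 ≤ t := by nlinarith
    have h4 : t ^ 4 ≤ t ^ 2 * t := by
      calc t ^ 4 = t ^ 2 * t ^ 2 := by ring
        _ ≤ t ^ 2 * t := mul_le_mul_of_nonneg_left ht2le (sq_nonneg t)
    have hab : t * (C * ‖v‖ * M + C * M * M) ≤ ε / 2 := by linarith
    have l1 : t ^ 3 * (C * ‖v‖ * M) = t ^ 2 * (t * (C * ‖v‖ * M)) := by ring
    have l2 : (1/2) * t ^ 4 * (C * M * M) ≤ t ^ 2 * (t * (C * M * M)) := by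
      have h6 := mul_le_mul_of_nonneg_right h4 hb
      have h7 : (0:ℝ) ≤ t ^ 4 * (C * M * M) := by positivity
      linarith
    have l4 : t ^ 2 * (t * (C * ‖v‖ * M + C * M * M)) ≤ t ^ 2 * (ε / 2) :=
      mul_le_mul_of_nonneg_left hab (sq_nonneg t)
    linarith
  linarith

end Aux

/-- If `s` lies in the tangent cone to the closed convex cone `K` at `y ∈ K`, then the
point `t y + t² s` is within `ε t²` of `K` for all small positive `t`. -/
lemma cone_dist {E : Type*} [NormedAddCommGroup E] [InnerProductSpace ℝ E]
    (K : Set E) (hKconv : Convex ℝ K)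
    (hKcone : ∀ t : ℝ, 0 ≤ t → ∀ x ∈ K, t • x ∈ K)
    (y : E) (hy : y ∈ K) (s : E) (hs : s ∈ tangentConeCA K y) (ε : ℝ) (hε : 0 < ε) :
    ∀ᶠ t in 𝓝[>] (0:ℝ), Metric.infDist (t • y + t ^ 2 • s) K ≤ ε * t ^ 2 := by
  have hKadd : ∀ a ∈ K, ∀ b ∈ K, a + b ∈ K := by
    intro a ha b hb
    have h1 : (1/2 : ℝ) • a + (1/2 : ℝ) • b ∈ K :=
      hKconv ha hb (by norm_num) (by norm_num) (by norm_num)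
    have h2 := hKcone 2 (by norm_num) _ h1
    have : (2:ℝ) • ((1/2 : ℝ) • a + (1/2 : ℝ) • b) = a + b := by
      rw [smul_add, smul_smul, smul_smul]; norm_num
    rwa [this] at h2
  obtain ⟨s', hs'S, hss'⟩ := Metric.mem_closure_iff.1 hs ε hε
  obtain ⟨τ, hτ, k, hk, rfl⟩ := hs'S
  have hb : (0:ℝ) < 1 / (τ + 1) := by positivity
  filter_upwards [Ioo_mem_nhdsGT_of_mem (show (0:ℝ) ∈ Ico 0 (1/(τ+1)) from ⟨le_rfl, hb⟩)]
    with t ht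
  obtain ⟨ht0, htb⟩ := ht
  have htτ : t * τ ≤ 1 := by
    rw [lt_div_iff₀ (by positivity)] at htb
    nlinarith
  have hmem : t • y + t ^ 2 • (τ • (k - y)) ∈ K := by
    have h1 : (0:ℝ) ≤ t - t ^ 2 * τ := by nlinarith
    have he : t • y + t ^ 2 • (τ • (k - y)) = (t - t ^ 2 * τ) • y + (t ^ 2 * τ) • k := by
      module
    rw [he]
    exact hKadd _ (hKcone _ h1 y hy) _ (hKcone _ (by positivity) k hk)
  calc Metric.infDist (t • y + t ^ 2 • s) K
      ≤ dist (t • y + t ^ 2 • s) (t • y + t ^ 2 • (τ • (k - y))) :=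
        Metric.infDist_le_dist_of_mem hmem
    _ = t ^ 2 * dist s (τ • (k - y)) := by
        rw [dist_add_left, dist_smul₀, Real.norm_of_nonneg (by positivity)]
    _ ≤ ε * t ^ 2 := by nlinarith [dist_nonneg (x := s) (y := τ • (k - y))]

set_option maxHeartbeats 1000000 in
/-- upper Lipschitzian property of the second-order auxiliary
mapping, pointwise version: under `C²`-smoothness of `G` with `G z̄ = 0`,
metric subregularity of `z ↦ G z - K` at `(z̄, 0)` with modulus `κ`, and
`∇G(z̄) v ∈ K`, every pair `(w, q)` with
`∇G(z̄) w + ½ ∇²G(z̄)(v,v) + q ∈ T_K(∇G(z̄) v)` admits `w̃` with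
`∇G(z̄) w̃ + ½ ∇²G(z̄)(v,v) ∈ T_K(∇G(z̄) v)` and `‖w̃ - w‖ ≤ κ ‖q‖`. -/
theorem upper_lipschitz_second_order
    {Z E : Type*} [NormedAddCommGroup Z] [InnerProductSpace ℝ Z] [FiniteDimensional ℝ Z]
    [NormedAddCommGroup E] [InnerProductSpace ℝ E] [FiniteDimensional ℝ E]
    (G : Z → E) (z0 : Z) (hG : ContDiffAt ℝ 2 G z0) (hG0 : G z0 = 0)
    (K : Set E) (hKclosed : IsClosed K) (hKconv : Convex ℝ K)
    (hKcone : ∀ t : ℝ, 0 ≤ t → ∀ x ∈ K, t • x ∈ K) (hK0 : (0 : E) ∈ K)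
    (κ : ℝ) (hκ : 0 ≤ κ)
    (hsub : ∀ᶠ z in 𝓝 z0, Metric.infDist z (G ⁻¹' K) ≤ κ * Metric.infDist (G z) K)
    (v : Z) (hv : fderiv ℝ G z0 v ∈ K) :
    ∀ (w : Z) (q : E),
      fderiv ℝ G z0 w + (1 / 2 : ℝ) • iteratedFDeriv ℝ 2 G z0 ![v, v] + q ∈
          tangentConeCA K (fderiv ℝ G z0 v) →
      ∃ w' : Z,
        fderiv ℝ G z0 w' + (1 / 2 : ℝ) • iteratedFDeriv ℝ 2 G z0 ![v, v] ∈
            tangentConeCA K (fderiv ℝ G z0 v) ∧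
        ‖w' - w‖ ≤ κ * ‖q‖ := by
  intro w q hwq
  have hit : iteratedFDeriv ℝ 2 G z0 ![v, v] = fderiv ℝ (fderiv ℝ G) z0 v v := by
    rw [iteratedFDeriv_two_apply]; simp
  rw [hit] at hwq ⊢
  set A := fderiv ℝ G z0 with hA
  set D := fderiv ℝ (fderiv ℝ G) z0 with hD'
  set y : E := A v with hy
  set c : E := (1 / 2 : ℝ) • D v v with hc
  set T : Set E := tangentConeCA K y with hT
  set S : Set E := {p | ∃ t : ℝ, 0 ≤ t ∧ ∃ z' ∈ K, p = t • (z' - y)} with hS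
  have hST : S ⊆ T := subset_closure
  clear_value c y D A
  have hTne : T.Nonempty := ⟨0, hST ⟨0, le_rfl, y, hv, by simp⟩⟩
  have hTclosed : IsClosed T := isClosed_closure
  have hpre : (G ⁻¹' K).Nonempty := ⟨z0, by simp [Set.mem_preimage, hG0, hK0]⟩
  set M : ℝ := ‖w‖ + κ * ‖q‖ + 2 * κ + 2 with hM
  have hM0 : 0 < M := by positivity
  -- main approximation step
  have main : ∀ ε : ℝ, 0 < ε → ε ≤ 1 → ∃ u : Z,
      ‖u - w‖ ≤ κ * ‖q‖ + (2 * κ + 1) * ε ∧ Metric.infDist (A u + c) T ≤ ε := by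
    intro ε hε hε1
    have htay := taylor_curve G z0 hG hG0 v M ε hM0 hε
    simp only [← hA, ← hD', ← hy, ← hc] at htay
    have hcd := cone_dist K hKconv hKcone y hv (A w + c + q) hwq ε hε
    have hzt : Tendsto (fun t : ℝ => z0 + t • v + t ^ 2 • w) (𝓝[>] 0) (𝓝 z0) := by
      have hcont : Continuous (fun t : ℝ => z0 + t • v + t ^ 2 • w) := by fun_prop
      have h1 : Tendsto (fun t : ℝ => z0 + t • v + t ^ 2 • w) (𝓝 0) (𝓝 z0) := by
        simpa using hcont.tendsto 0
      exact h1.mono_left nhdsWithin_le_nhds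
    have hsub' := hzt.eventually hsub
    have hpos : ∀ᶠ t in 𝓝[>] (0:ℝ), 0 < t := eventually_mem_nhdsWithin
    obtain ⟨t, htay', hcd', hsub'', ht0⟩ := (htay.and (hcd.and (hsub'.and hpos))).exists
    have ht2 : (0:ℝ) < t ^ 2 := by positivity
    set zt : Z := z0 + t • v + t ^ 2 • w with hzt'
    -- Taylor at u = w
    have hwM : ‖w‖ ≤ M := by
      have : 0 ≤ κ * ‖q‖ := by positivity
      simp only [hM]; linarith
    have htw := htay' w hwM
    rw [← hzt'] at htw
    -- distance of G zt to K
    have hdist1 : Metric.infDist (G zt) K ≤ (‖q‖ + 2 * ε) * t ^ 2 := by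
      have h1 : Metric.infDist (G zt) K ≤
          Metric.infDist (t • y + t ^ 2 • (A w + c + q)) K
            + dist (G zt) (t • y + t ^ 2 • (A w + c + q)) :=
        Metric.infDist_le_infDist_add_dist (x := G zt)
          (y := t • y + t ^ 2 • (A w + c + q)) (s := K)
      have h2 : dist (G zt) (t • y + t ^ 2 • (A w + c + q)) ≤ ε * t ^ 2 + ‖q‖ * t ^ 2 := by
        rw [dist_eq_norm]
        have he : G zt - (t • y + t ^ 2 • (A w + c + q)) =
            (G zt - (t • y + t ^ 2 • (A w + c))) - t ^ 2 • q := by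
          rw [smul_add]; abel
        rw [he]
        calc ‖(G zt - (t • y + t ^ 2 • (A w + c))) - t ^ 2 • q‖
            ≤ ‖G zt - (t • y + t ^ 2 • (A w + c))‖ + ‖t ^ 2 • q‖ := norm_sub_le _ _
          _ ≤ ε * t ^ 2 + ‖q‖ * t ^ 2 := by
              have : ‖t ^ 2 • q‖ = t ^ 2 * ‖q‖ := by
                rw [norm_smul, Real.norm_of_nonneg ht2.le]
              rw [this]
              have htw' : ‖G zt - (t • y + t ^ 2 • (A w + c))‖ ≤ ε * t ^ 2 := htw
              nlinarith [norm_nonneg q]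
      have h3 := hcd'
      linarith
    -- find a nearby point of G ⁻¹' K
    have hsubb : Metric.infDist zt (G ⁻¹' K) < (κ * (‖q‖ + 2 * ε) + ε) * t ^ 2 := by
      have h4 : Metric.infDist zt (G ⁻¹' K) ≤ κ * Metric.infDist (G zt) K := hsub''
      have h5 : κ * Metric.infDist (G zt) K ≤ κ * ((‖q‖ + 2 * ε) * t ^ 2) :=
        mul_le_mul_of_nonneg_left hdist1 hκ
      have h6 : 0 < ε * t ^ 2 := by positivity
      nlinarith
    obtain ⟨z', hz'K, hz'd⟩ := (Metric.infDist_lt_iff hpre).1 hsubb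
    set u : Z := (t ^ 2)⁻¹ • (z' - z0 - t • v) with hu'
    have hz'e : z' = z0 + t • v + t ^ 2 • u := by
      rw [hu', smul_inv_smul₀ (ne_of_gt ht2)]
      abel
    have huw : ‖u - w‖ ≤ κ * ‖q‖ + (2 * κ + 1) * ε := by
      have he : u - w = (t ^ 2)⁻¹ • (z' - zt) := by
        rw [hu', hzt']
        match_scalars <;> (field_simp; try ring)
      have hn : ‖u - w‖ = (t ^ 2)⁻¹ * ‖z' - zt‖ := by
        rw [he, norm_smul, Real.norm_of_nonneg (by positivity)]
      have hd : ‖z' - zt‖ ≤ (κ * (‖q‖ + 2 * ε) + ε) * t ^ 2 := by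
        rw [← dist_eq_norm']
        exact hz'd.le
      rw [hn]
      calc (t ^ 2)⁻¹ * ‖z' - zt‖ ≤ (t ^ 2)⁻¹ * ((κ * (‖q‖ + 2 * ε) + ε) * t ^ 2) :=
            mul_le_mul_of_nonneg_left hd (by positivity)
        _ = κ * (‖q‖ + 2 * ε) + ε := by field_simp
        _ = κ * ‖q‖ + (2 * κ + 1) * ε := by ring
    refine ⟨u, huw, ?_⟩
    -- Taylor at u
    have huM : ‖u‖ ≤ M := by
      have h7 : ‖u‖ ≤ ‖u - w‖ + ‖w‖ := by
        have := norm_sub_norm_le (u - w) (-w)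
        calc ‖u‖ = ‖(u - w) + w‖ := by rw [sub_add_cancel]
          _ ≤ ‖u - w‖ + ‖w‖ := norm_add_le _ _
      have h8 : (2 * κ + 1) * ε ≤ 2 * κ + 1 := by nlinarith
      simp only [hM]; linarith
    have htu' := htay' u huM
    rw [← hz'e] at htu'
    have htu : ‖G z' - (t • y + t ^ 2 • (A u + c))‖ ≤ ε * t ^ 2 := htu'
    -- the point (t²)⁻¹ (G z' - t y) belongs to S
    have hpS : (t ^ 2)⁻¹ • (G z' - t • y) ∈ S := by
      refine ⟨t⁻¹, by positivity, t⁻¹ • G z', hKcone t⁻¹ (by positivity) _ hz'K, ?_⟩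
      have : (t ^ 2)⁻¹ • (G z' - t • y) = t⁻¹ • (t⁻¹ • G z' - y) := by
        match_scalars <;> (field_simp; try ring)
      rw [this]
    have hfin : Metric.infDist (A u + c) T ≤ ε := by
      have hdT : dist (A u + c) ((t ^ 2)⁻¹ • (G z' - t • y)) ≤ ε := by
        rw [dist_eq_norm]
        have he2 : A u + c - (t ^ 2)⁻¹ • (G z' - t • y) =
            (-(t ^ 2)⁻¹) • (G z' - (t • y + t ^ 2 • (A u + c))) := by
          match_scalars <;> (field_simp; try ring)
        rw [he2, norm_smul]
        have : ‖(-(t ^ 2)⁻¹ : ℝ)‖ = (t ^ 2)⁻¹ := by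
          rw [norm_neg, Real.norm_of_nonneg (by positivity)]
        rw [this]
        calc (t ^ 2)⁻¹ * ‖G z' - (t • y + t ^ 2 • (A u + c))‖
            ≤ (t ^ 2)⁻¹ * (ε * t ^ 2) := mul_le_mul_of_nonneg_left htu (by positivity)
          _ = ε := by field_simp
      exact le_trans (Metric.infDist_le_dist_of_mem (hST hpS)) hdT
    exact hfin
  -- extract a convergent sequence
  have hseq : ∀ n : ℕ, ∃ u : Z,
      ‖u - w‖ ≤ κ * ‖q‖ + (2 * κ + 1) * (1 / (n + 1)) ∧
      Metric.infDist (A u + c) T ≤ 1 / (n + 1) := by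
    intro n
    refine main (1 / (n + 1)) (by positivity) ?_
    rw [div_le_one (by positivity)]
    exact le_add_of_nonneg_left (Nat.cast_nonneg n)
  choose u hu1 hu2 using hseq
  have hub : ∀ n, u n ∈ Metric.closedBall w (κ * ‖q‖ + 2 * κ + 1) := by
    intro n
    rw [Metric.mem_closedBall, dist_eq_norm]
    have h1 : (2 * κ + 1) * (1 / (n + 1 : ℝ)) ≤ 2 * κ + 1 := by
      have : (1 : ℝ) / (n + 1) ≤ 1 := by
        rw [div_le_one (by positivity)]
        exact le_add_of_nonneg_left (Nat.cast_nonneg n)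
      nlinarith
    linarith [hu1 n]
  obtain ⟨w', hw'b, φ, hφ, hlim⟩ :=
    (isCompact_closedBall w (κ * ‖q‖ + 2 * κ + 1)).tendsto_subseq hub
  have hφt : Tendsto (fun n => (1 : ℝ) / (φ n + 1)) atTop (𝓝 0) :=
    tendsto_one_div_add_atTop_nhds_zero_nat.comp hφ.tendsto_atTop
  have hAc : Tendsto (fun n => A (u (φ n)) + c) atTop (𝓝 (A w' + c)) := by
    have h1 : Tendsto (fun n => A (u (φ n))) atTop (𝓝 (A w')) :=
      (A.continuous.tendsto w').comp hlim
    exact h1.add tendsto_const_nhds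
  have hid : Tendsto (fun n => Metric.infDist (A (u (φ n)) + c) T) atTop
      (𝓝 (Metric.infDist (A w' + c) T)) :=
    ((continuous_infDist_pt T).tendsto _).comp hAc
  have hzero : Metric.infDist (A w' + c) T = 0 := by
    have hle : Metric.infDist (A w' + c) T ≤ 0 := by
      refine le_of_tendsto_of_tendsto' hid hφt ?_
      intro n
      exact hu2 (φ n)
    exact le_antisymm hle Metric.infDist_nonneg
  have hmemT : A w' + c ∈ T := (hTclosed.mem_iff_infDist_zero hTne).2 hzero
  refine ⟨w', hmemT, ?_⟩
  have hnl : Tendsto (fun n => ‖u (φ n) - w‖) atTop (𝓝 ‖w' - w‖) := by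
    have h1 : Tendsto (fun n => u (φ n) - w) atTop (𝓝 (w' - w)) :=
      hlim.sub tendsto_const_nhds
    exact (continuous_norm.tendsto _).comp h1
  have hrl : Tendsto (fun n => κ * ‖q‖ + (2 * κ + 1) * (1 / (φ n + 1 : ℝ))) atTop
      (𝓝 (κ * ‖q‖)) := by
    have := hφt.const_mul (2 * κ + 1)
    have h2 := this.const_add (κ * ‖q‖)
    simpa using h2
  exact le_of_tendsto_of_tendsto' hnl hrl (fun n => hu1 (φ n))
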